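/- The Lévy-Prokhorov lifting is locally nonexpansive: for nonexpansive maps f₁, f₂ : ⟨X,d_X⟩ → ⟨Y,d_Y⟩, sup_{φ ∈ DX} δ_LP^{d_Y}(Df₁(φ), Df₂(φ)) ≤ sup_{x ∈ X} d_Y(f₁(x), f₂(x)). -/

import Mathlib

open scoped ENNReal Classical

noncomputable section

def mass {S : Type*} (φ : S → ℝ≥0∞) (X : Set S) : ℝ≥0∞ := ∑' x : X, φ x

def IsSubdist {S : Type*} (φ : S → ℝ≥0∞) : Prop := mass φ Set.univ ≤ 1

def IsPseudometric {S : Type*} (d : S → S → ℝ≥0∞) : Prop :=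
  (∀ x, d x x = 0) ∧ (∀ x y, d x y = d y x) ∧ (∀ x y z, d x z ≤ d x y + d y z)

def Bounded1 {S : Type*} (d : S → S → ℝ≥0∞) : Prop := ∀ x y, d x y ≤ 1

def eball {S : Type*} (d : S → S → ℝ≥0∞) (X : Set S) (ε : ℝ≥0∞) : Set S :=
  {y | ∃ x ∈ X, d x y < ε}

def LP {S : Type*} (d : S → S → ℝ≥0∞) (μ ν : S → ℝ≥0∞) : ℝ≥0∞ :=
  sInf {ε | ∀ X : Set S,
    mass μ X ≤ mass ν (eball d X ε) + ε ∧ mass ν X ≤ mass μ (eball d X ε) + ε}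

def push {X Y : Type*} (f : X → Y) (φ : X → ℝ≥0∞) : Y → ℝ≥0∞ :=
  fun y => mass φ (f ⁻¹' {y})

lemma mass_mono {S : Type*} (φ : S → ℝ≥0∞) {A B : Set S} (h : A ⊆ B) :
    mass φ A ≤ mass φ B := by
  rw [mass, mass, tsum_subtype, tsum_subtype]
  exact ENNReal.tsum_le_tsum fun x =>
    Set.indicator_le_indicator_of_subset h (fun _ => zero_le) x

lemma push_mass {X Y : Type*} (f : X → Y) (φ : X → ℝ≥0∞) (B : Set Y) :
    mass (push f φ) B = mass φ (f ⁻¹' B) := by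
  have h1 : mass (push f φ) B = ∑' (y : B), ∑' (x : X), (f ⁻¹' {(y : Y)}).indicator φ x := by
    rw [mass]
    congr 1
    ext y
    rw [push, mass, tsum_subtype]
  rw [h1, ENNReal.tsum_comm, mass, tsum_subtype]
  congr 1
  ext x
  by_cases hx : f x ∈ B
  · rw [tsum_eq_single (⟨f x, hx⟩ : B)]
    · simp [Set.indicator, hx]
    · intro y hy
      have : f x ≠ (y : Y) := fun h => hy (Subtype.ext h.symm)
      simp [Set.indicator, this]
  · have : ∀ y : B, (f ⁻¹' {(y : Y)}).indicator φ x = 0 := by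
      intro y
      have : f x ≠ (y : Y) := fun h => hx (h ▸ y.2)
      simp [Set.indicator, this]
    simp only [this, tsum_zero]; exact (Set.indicator_of_notMem (f := φ) (a := x) hx).symm

theorem stmt14 {X Y : Type*} (dX : X → X → ℝ≥0∞) (dY : Y → Y → ℝ≥0∞)
    (hX : IsPseudometric dX) (hY : IsPseudometric dY)
    (f₁ f₂ : X → Y)
    (hf₁ : ∀ x x', dY (f₁ x) (f₁ x') ≤ dX x x')
    (hf₂ : ∀ x x', dY (f₂ x) (f₂ x') ≤ dX x x') :
    (⨆ φ : {φ : X → ℝ≥0∞ // IsSubdist φ}, LP dY (push f₁ φ.1) (push f₂ φ.1)) ≤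
      ⨆ x : X, dY (f₁ x) (f₂ x) := by
  set s := ⨆ x : X, dY (f₁ x) (f₂ x) with hs
  refine iSup_le fun φ => ?_
  by_contra hlt
  push_neg at hlt
  obtain ⟨ε, hsε, hεLP⟩ := exists_between hlt
  have hmem : ε ∈ {ε | ∀ B : Set Y,
      mass (push f₁ φ.1) B ≤ mass (push f₂ φ.1) (eball dY B ε) + ε ∧
      mass (push f₂ φ.1) B ≤ mass (push f₁ φ.1) (eball dY B ε) + ε} := by
    intro B
    have hd : ∀ x : X, dY (f₁ x) (f₂ x) < ε :=
      fun x => lt_of_le_of_lt (le_iSup (fun x => dY (f₁ x) (f₂ x)) x) hsε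
    constructor
    · rw [push_mass, push_mass]
      have hsub : f₁ ⁻¹' B ⊆ f₂ ⁻¹' (eball dY B ε) := by
        intro x hx
        exact ⟨f₁ x, hx, hd x⟩
      exact le_trans (mass_mono φ.1 hsub) le_self_add
    · rw [push_mass, push_mass]
      have hsub : f₂ ⁻¹' B ⊆ f₁ ⁻¹' (eball dY B ε) := by
        intro x hx
        exact ⟨f₂ x, hx, by rw [hY.2.1]; exact hd x⟩
      exact le_trans (mass_mono φ.1 hsub) le_self_add
  exact absurd (sInf_le hmem) (not_le.mpr hεLP)
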